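/- Let θ ∈ (0,2), θ ≠ 1, and define the 2×2 matrix Ã(z,θ) = −(1/2)I − [[a₁₁, a₁₂],[a₂₁, a₂₂]] with the same entries a_{jℓ}(z,θ) as in the previous statement. Then for z ∈ ℂ not an integer, det Ã(z,θ) = (z sin(πθ) + sin(πzθ)) (z sin(πθ) + sin(πz(2−θ))) / (4 sin²(πz)). -/

import Mathlib

open Real

noncomputable def a11 (z θ : ℂ) : ℂ :=
  ((z + 1) * Complex.sin ((π : ℂ) * θ) * Complex.cos ((π : ℂ) * z * (1 - θ))
    - Complex.sin ((π : ℂ) * (z * (1 - θ) + θ))) / (2 * Complex.sin ((π : ℂ) * z))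

noncomputable def a12 (z θ : ℂ) : ℂ :=
  -((z - 1) * Complex.sin ((π : ℂ) * θ) * Complex.sin ((π : ℂ) * z * (1 - θ)))
    / (2 * Complex.sin ((π : ℂ) * z))

noncomputable def a21 (z θ : ℂ) : ℂ :=
  ((z + 1) * Complex.sin ((π : ℂ) * θ) * Complex.sin ((π : ℂ) * z * (1 - θ)))
    / (2 * Complex.sin ((π : ℂ) * z))

noncomputable def a22 (z θ : ℂ) : ℂ :=
  ((z + 1) * Complex.sin ((π : ℂ) * θ) * Complex.cos ((π : ℂ) * z * (1 - θ))
    + Complex.sin ((π : ℂ) * (z * (1 - θ) - θ))) / (2 * Complex.sin ((π : ℂ) * z))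

set_option maxHeartbeats 3200000 in
theorem det_A_note (θ : ℝ) (hθ : θ ∈ Set.Ioo (0 : ℝ) 2) (hθ1 : θ ≠ 1)
    (z : ℂ) (hz : ∀ n : ℤ, z ≠ (n : ℂ)) :
    Matrix.det
        (-(1 / 2 : ℂ) • (1 : Matrix (Fin 2) (Fin 2) ℂ) -
          !![a11 z θ, a12 z θ; a21 z θ, a22 z θ])
      = (z * Complex.sin ((π : ℂ) * θ) + Complex.sin ((π : ℂ) * z * θ))
          * (z * Complex.sin ((π : ℂ) * θ) + Complex.sin ((π : ℂ) * z * (2 - θ)))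
          / (4 * Complex.sin ((π : ℂ) * z) ^ 2) := by
  have hπ : (π : ℂ) ≠ 0 := Complex.ofReal_ne_zero.2 Real.pi_ne_zero
  have hs : Complex.sin ((π : ℂ) * z) ≠ 0 := by
    rw [Complex.sin_ne_zero_iff]
    intro k hk
    have h2 : (π : ℂ) * z = (π : ℂ) * k := by rw [hk]; ring
    exact hz k (mul_left_cancel₀ hπ h2)
  set A := Complex.exp ((π : ℂ) * z * Complex.I) with hAdef
  set B := Complex.exp ((π : ℂ) * θ * Complex.I) with hBdef
  set C := Complex.exp ((π : ℂ) * z * θ * Complex.I) with hCdef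
  have hA0 : A ≠ 0 := Complex.exp_ne_zero _
  have hB0 : B ≠ 0 := Complex.exp_ne_zero _
  have hC0 : C ≠ 0 := Complex.exp_ne_zero _
  have expand : ∀ w : ℂ, Complex.sin w = (Complex.exp (-(w*Complex.I)) - Complex.exp (w*Complex.I)) * Complex.I / 2 := by
    intro w; rw [Complex.sin]; ring_nf
  have expandc : ∀ w : ℂ, Complex.cos w = (Complex.exp (w*Complex.I) + Complex.exp (-(w*Complex.I))) / 2 := by
    intro w; rw [Complex.cos]; ring_nf
  have s1 : Complex.sin ((π : ℂ) * θ) = (1 - B^2) * Complex.I / (2*B) := by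
    rw [expand, Complex.exp_neg]; field_simp; ring
  have s2 : Complex.sin ((π : ℂ) * z) = (1 - A^2) * Complex.I / (2*A) := by
    rw [expand, Complex.exp_neg]; field_simp; ring
  have c3 : Complex.cos ((π : ℂ) * z * (1 - θ)) = (A^2 + C^2) / (2*A*C) := by
    rw [expandc, show ((π : ℂ) * z * (1 - θ))*Complex.I = (π : ℂ)*z*Complex.I + -((π : ℂ)*z*θ*Complex.I) by ring]
    simp only [Complex.exp_neg, Complex.exp_add, mul_inv, inv_inv, ← hAdef, ← hBdef, ← hCdef]
    field_simp
  have s4 : Complex.sin ((π : ℂ) * (z * (1 - θ) + θ)) = (C^2 - A^2*B^2) * Complex.I / (2*A*B*C) := by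
    rw [expand, show ((π : ℂ) * (z * (1 - θ) + θ))*Complex.I = (π : ℂ)*z*Complex.I + -((π : ℂ)*z*θ*Complex.I) + (π : ℂ)*θ*Complex.I by ring]
    simp only [Complex.exp_neg, Complex.exp_add, mul_inv, inv_inv, ← hAdef, ← hBdef, ← hCdef]
    field_simp
  have s5 : Complex.sin ((π : ℂ) * z * (1 - θ)) = (C^2 - A^2) * Complex.I / (2*A*C) := by
    rw [expand, show ((π : ℂ) * z * (1 - θ))*Complex.I = (π : ℂ)*z*Complex.I + -((π : ℂ)*z*θ*Complex.I) by ring]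
    simp only [Complex.exp_neg, Complex.exp_add, mul_inv, inv_inv, ← hAdef, ← hBdef, ← hCdef]
    field_simp
  have s6 : Complex.sin ((π : ℂ) * (z * (1 - θ) - θ)) = (B^2*C^2 - A^2) * Complex.I / (2*A*B*C) := by
    rw [expand, show ((π : ℂ) * (z * (1 - θ) - θ))*Complex.I = (π : ℂ)*z*Complex.I + -((π : ℂ)*z*θ*Complex.I) + -((π : ℂ)*θ*Complex.I) by ring]
    simp only [Complex.exp_neg, Complex.exp_add, mul_inv, inv_inv, ← hAdef, ← hBdef, ← hCdef]
    field_simp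
  have s7 : Complex.sin ((π : ℂ) * z * θ) = (1 - C^2) * Complex.I / (2*C) := by
    rw [expand, Complex.exp_neg]; field_simp; ring
  have s8 : Complex.sin ((π : ℂ) * z * (2 - θ)) = (C^2 - A^4) * Complex.I / (2*A^2*C) := by
    rw [expand, show ((π : ℂ) * z * (2 - θ))*Complex.I = ((π : ℂ)*z*Complex.I + (π : ℂ)*z*Complex.I) + -((π : ℂ)*z*θ*Complex.I) by ring]
    simp only [Complex.exp_neg, Complex.exp_add, mul_inv, inv_inv, ← hAdef, ← hBdef, ← hCdef]
    field_simp
  have hAA : (1 : ℂ) - A^2 ≠ 0 := by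
    intro h
    apply hs
    rw [s2, h]; ring
  have hI2 : Complex.I ^ 2 = -1 := Complex.I_sq
  have hI4 : Complex.I ^ 4 = 1 := by rw [show (4:ℕ) = 2*2 from rfl, pow_mul, hI2]; ring
  have hI3 : Complex.I ^ 3 = -Complex.I := by rw [show (3:ℕ) = 2+1 from rfl, pow_succ, hI2]; ring
  have hsin' : (1 - A^2) * Complex.I / (2*A) ≠ 0 := s2 ▸ hs
  have hL : (2:ℂ) * ((1 - A^2) * Complex.I / (2*A)) ≠ 0 := mul_ne_zero two_ne_zero hsin'
  have hd0 : (4:ℂ)*B*C*(1-A^2) ≠ 0 :=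
    mul_ne_zero (mul_ne_zero (mul_ne_zero (by norm_num) hB0) hC0) hAA
  have hdd : ((4:ℂ)*B*C*(1-A^2)) * ((4:ℂ)*B*C*(1-A^2)) ≠ 0 := mul_ne_zero hd0 hd0
  have hsq : ((1:ℂ) - A^2)^2 ≠ 0 := pow_ne_zero 2 hAA
  have hL2 : (2:ℂ) * Complex.sin ((π : ℂ) * z) ≠ 0 := mul_ne_zero two_ne_zero hs
  have A11 : a11 z θ = ((z+1)*(1-B^2)*(A^2+C^2) - 2*(C^2-A^2*B^2)) / (4*B*C*(1-A^2)) := by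
    rw [a11, div_eq_div_iff hL2 hd0, s1, s2, c3, s4]
    field_simp
    try rw [div_eq_iff (by simp [hA0, hB0, hC0, mul_ne_zero_iff])]
    try rw [eq_div_iff (by simp [hA0, hB0, hC0, mul_ne_zero_iff])]
    try ring_nf
    try simp only [hI2, hI3, hI4]
    try ring
  have A12 : a12 z θ = -((z-1)*(1-B^2)*(C^2-A^2)*Complex.I) / (4*B*C*(1-A^2)) := by
    rw [a12, div_eq_div_iff hL2 hd0, s1, s2, s5]
    field_simp
    try rw [div_eq_iff (by simp [hA0, hB0, hC0, mul_ne_zero_iff])]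
    try rw [eq_div_iff (by simp [hA0, hB0, hC0, mul_ne_zero_iff])]
    try ring_nf
    try simp only [hI2, hI3, hI4]
    try ring
  have A21 : a21 z θ = ((z+1)*(1-B^2)*(C^2-A^2)*Complex.I) / (4*B*C*(1-A^2)) := by
    rw [a21, div_eq_div_iff hL2 hd0, s1, s2, s5]
    field_simp
    try rw [div_eq_iff (by simp [hA0, hB0, hC0, mul_ne_zero_iff])]
    try rw [eq_div_iff (by simp [hA0, hB0, hC0, mul_ne_zero_iff])]
    try ring_nf
    try simp only [hI2, hI3, hI4]
    try ring
  have A22 : a22 z θ = ((z+1)*(1-B^2)*(A^2+C^2) + 2*(B^2*C^2-A^2)) / (4*B*C*(1-A^2)) := by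
    rw [a22, div_eq_div_iff hL2 hd0, s1, s2, c3, s6]
    field_simp
    try rw [div_eq_iff (by simp [hA0, hB0, hC0, mul_ne_zero_iff])]
    try rw [eq_div_iff (by simp [hA0, hB0, hC0, mul_ne_zero_iff])]
    try ring_nf
    try simp only [hI2, hI3, hI4]
    try ring
  have hdet : Matrix.det
        (-(1 / 2 : ℂ) • (1 : Matrix (Fin 2) (Fin 2) ℂ) -
          !![a11 z θ, a12 z θ; a21 z θ, a22 z θ])
      = (-(1/2:ℂ) - a11 z θ) * (-(1/2:ℂ) - a22 z θ) - a12 z θ * a21 z θ := by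
    rw [Matrix.det_fin_two]
    simp [Matrix.one_apply]
  have e1 : -(1/2:ℂ) - a11 z θ
      = (-(2*B*C*(1-A^2)) - ((z+1)*(1-B^2)*(A^2+C^2) - 2*(C^2-A^2*B^2))) / (4*B*C*(1-A^2)) := by
    rw [A11, eq_div_iff hd0, sub_mul, div_mul_cancel₀ _ hd0]
    ring
  have e2 : -(1/2:ℂ) - a22 z θ
      = (-(2*B*C*(1-A^2)) - ((z+1)*(1-B^2)*(A^2+C^2) + 2*(B^2*C^2-A^2))) / (4*B*C*(1-A^2)) := by
    rw [A22, eq_div_iff hd0, sub_mul, div_mul_cancel₀ _ hd0]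
    ring
  have hss : (4:ℂ) * (((1:ℂ) - A^2) * Complex.I / (2*A))^2
      = (-(((1:ℂ)-A^2)^2)) / A^2 := by
    rw [div_pow, mul_pow, hI2]
    field_simp
    ring
  have hneg : -(((1:ℂ)-A^2)^2) ≠ 0 := neg_ne_zero.2 hsq
  rw [hdet, e1, e2, A12, A21, s1, s2, s7, s8, hss,
    div_mul_div_comm, div_mul_div_comm, div_sub_div_same, div_div_eq_mul_div]
  rw [div_eq_div_iff hdd hneg]
  field_simp
  try rw [div_eq_iff (by simp [hA0, hB0, hC0, mul_ne_zero_iff])]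
  try rw [eq_div_iff (by simp [hA0, hB0, hC0, mul_ne_zero_iff])]
  try ring_nf
  try simp only [hI2, hI3, hI4]
  try ring
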